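/- Let W be a graphon such that the metric space (J, r_W) can be covered by m balls of radius ε (for some 0 < ε < 1). Then there exists a stepfunction U with at most m·(1/ε)^m steps such that ‖W − U‖₁ ≤ 2ε. -/

import Mathlib

open MeasureTheory

/-- If the metric space `(J, r_W)` of a graphon `W` can be covered by `m`
balls of radius `ε`, then there is a stepfunction `U` with at most
`m·(1/ε)^m` steps such that `‖W − U‖₁ ≤ 2ε`. -/
theorem stepfunction_approximation_of_covering
    {J : Type*} [MeasurableSpace J] (μ : Measure J) [IsProbabilityMeasure μ]
    (W : J → J → ℝ)
    (hWmeas : Measurable (fun p : J × J => W p.1 p.2))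
    (hWsymm : ∀ x y, W x y = W y x)
    (hW0 : ∀ x y, 0 ≤ W x y) (hW1 : ∀ x y, W x y ≤ 1)
    (rW : J → J → ℝ)
    (hrW : ∀ x y, rW x y = ∫ z, |W x z - W y z| ∂μ)
    (ε : ℝ) (hε0 : 0 < ε) (hε1 : ε < 1)
    (m : ℕ)
    (hcover : ∃ ctr : Fin m → J, ∀ y : J, ∃ i, rW y (ctr i) ≤ ε) :
    ∃ (n : ℕ) (P : Fin n → Set J) (U : J → J → ℝ),
      (n : ℝ) ≤ (m : ℝ) * (1 / ε) ^ m ∧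
      (∀ i, MeasurableSet (P i)) ∧
      (∀ i j, i ≠ j → Disjoint (P i) (P j)) ∧
      (⋃ i, P i) = Set.univ ∧
      -- `U` is a stepfunction with steps `P i`
      (∀ i j, ∀ x ∈ P i, ∀ y ∈ P j, ∀ x' ∈ P i, ∀ y' ∈ P j, U x y = U x' y') ∧
      (∫ x, ∫ y, |W x y - U x y| ∂μ ∂μ) ≤ 2 * ε := by
  classical
  obtain ⟨ctr, hctr⟩ := hcover
  have hJ : Nonempty J := by
    by_contra h
    rw [not_nonempty_iff] at h
    have h1 : μ Set.univ = 1 := measure_univ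
    rw [Set.univ_eq_empty_iff.mpr h] at h1
    simp at h1
  have hm : 0 < m := by
    rcases Nat.eq_zero_or_pos m with h | h
    · exfalso; subst h
      obtain ⟨i, _⟩ := hctr (Classical.arbitrary J)
      exact i.elim0
    · exact h
  set K : ℕ := ⌊1/ε⌋₊ with hKdef
  have hε1' : (1:ℝ) ≤ 1/ε := by rw [le_div_iff₀ hε0]; linarith
  have hK1 : 1 ≤ K := Nat.le_floor (by exact_mod_cast hε1')
  have hKle : (K:ℝ) ≤ 1/ε := Nat.floor_le (by positivity)
  have hKgt : 1 - ε < ε * K := by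
    have h2 : (1:ℝ)/ε < K + 1 := Nat.lt_floor_add_one (1/ε)
    have h3 : 1 < ε * (K + 1) := by
      calc (1:ℝ) = ε * (1/ε) := by field_simp
      _ < ε * (K + 1) := by exact (mul_lt_mul_iff_right₀ hε0).mpr h2
    nlinarith
  -- rounding function
  set F : ℝ → ℕ := fun t => min ⌊t/ε⌋₊ (K-1) with hFdef
  have hround : ∀ t : ℝ, 0 ≤ t → t ≤ 1 → |t - ε * ((F t : ℝ) + 1)| ≤ ε := by
    intro t ht0 ht1
    rcases le_or_gt ⌊t/ε⌋₊ (K-1) with h | h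
    · have hF : F t = ⌊t/ε⌋₊ := min_eq_left h
      rw [hF]
      have h1 : (⌊t/ε⌋₊ : ℝ) ≤ t/ε := Nat.floor_le (by positivity)
      have h1' : ε * (⌊t/ε⌋₊ : ℝ) ≤ t := by
        rw [mul_comm]
        exact (le_div_iff₀ hε0).mp h1
      have h2 : t/ε < (⌊t/ε⌋₊ : ℝ) + 1 := Nat.lt_floor_add_one _
      have h2' : t < ε * ((⌊t/ε⌋₊ : ℝ) + 1) := by
        rw [mul_comm]
        exact (div_lt_iff₀ hε0).mp h2
      rw [abs_le]
      constructor <;> nlinarith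
    · have hF : F t = K - 1 := min_eq_right h.le
      rw [hF]
      have hKK : ((K - 1 : ℕ) : ℝ) + 1 = (K : ℝ) := by
        rw [Nat.cast_sub hK1]; ring
      rw [hKK]
      have hKf : K ≤ ⌊t/ε⌋₊ := by omega
      have h1 : (K : ℝ) ≤ t/ε := le_trans (by exact_mod_cast hKf) (Nat.floor_le (by positivity))
      have h1' : ε * (K:ℝ) ≤ t := by
        rw [mul_comm]
        exact (le_div_iff₀ hε0).mp h1
      rw [abs_le]
      constructor <;> nlinarith
  -- measurability of r_W sections
  have hWsec : ∀ c : J, Measurable fun y => W c y := by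
    intro c
    exact hWmeas.comp measurable_prodMk_left
  have hWsec' : ∀ c : J, Measurable fun y => W y c := by
    intro c
    exact hWmeas.comp (measurable_id.prodMk measurable_const)
  have hrWmeas : ∀ c : J, Measurable fun x => rW x c := by
    intro c
    have heq : (fun x => rW x c) = fun x => ∫ z, |W x z - W c z| ∂μ := by
      funext x; exact hrW x c
    rw [heq]
    have hsm : StronglyMeasurable fun p : J × J => |W p.1 p.2 - W c p.2| := by
      apply Measurable.stronglyMeasurable
      exact (hWmeas.sub ((hWsec c).comp measurable_snd)).abs
    exact hsm.integral_prod_right'.measurable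
  -- the Voronoi-type partition into m pieces
  set A : Fin m → Set J := fun i => {x | rW x (ctr i) ≤ ε} with hAdef
  have hAmeas : ∀ i, MeasurableSet (A i) := by
    intro i
    exact measurableSet_le (hrWmeas (ctr i)) measurable_const
  set S : Fin m → Set J := fun j => A j \ ⋃ i, ⋃ (_ : i < j), A i with hSdef
  have hSmeas : ∀ j, MeasurableSet (S j) :=
    fun j => (hAmeas j).diff (MeasurableSet.iUnion fun i =>
      MeasurableSet.iUnion fun _ => hAmeas i)
  have hSex : ∀ x, ∃ j, x ∈ S j := by
    intro x
    have hne : (Finset.univ.filter (fun i => rW x (ctr i) ≤ ε)).Nonempty := by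
      obtain ⟨i, hi⟩ := hctr x
      exact ⟨i, by simp [hi]⟩
    set j := Finset.min' _ hne with hj
    have hjmem := Finset.min'_mem _ hne
    rw [Finset.mem_filter] at hjmem
    refine ⟨j, hjmem.2, ?_⟩
    intro hx
    simp only [Set.mem_iUnion] at hx
    obtain ⟨i, hij, hi⟩ := hx
    have : j ≤ i := Finset.min'_le _ _ (by simpa using (show rW x (ctr i) ≤ ε from hi))
    exact absurd hij (not_lt.mpr this)
  have hSdisj : ∀ j j' : Fin m, j ≠ j' → Disjoint (S j) (S j') := by
    have key : ∀ j j' : Fin m, j < j' → Disjoint (S j) (S j') := by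
      intro j j' h
      rw [Set.disjoint_left]
      intro x hx hx'
      exact hx'.2 (Set.mem_iUnion.mpr ⟨j, Set.mem_iUnion.mpr ⟨h, hx.1⟩⟩)
    intro j j' hne
    rcases lt_or_gt_of_ne hne with h | h
    · exact key _ _ h
    · exact (key _ _ h).symm
  set jdx : J → Fin m := fun x => (hSex x).choose with hjdxdef
  have hjdx : ∀ x, x ∈ S (jdx x) := fun x => (hSex x).choose_spec
  have hjdx_eq : ∀ x (j : Fin m), x ∈ S j → jdx x = j := by
    intro x j hx
    by_contra h
    exact (Set.disjoint_left.mp (hSdisj _ _ h) (hjdx x)) hx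
  -- the refinement by rounded values
  have hFK : ∀ t, F t < K := by
    intro t
    exact lt_of_le_of_lt (min_le_right _ _) (Nat.sub_lt hK1 one_pos)
  set kdx : J → Fin m → Fin K := fun y i => ⟨F (W (ctr i) y), hFK _⟩ with hkdxdef
  have hFmeas : Measurable F := by
    apply Measurable.min
    · exact Nat.measurable_floor.comp (measurable_id.div_const ε)
    · exact measurable_const
  set idx : J → Fin m × (Fin m → Fin K) := fun x => (jdx x, kdx x) with hidxdef
  have hidxmeas : ∀ p : Fin m × (Fin m → Fin K), MeasurableSet (idx ⁻¹' {p}) := by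
    intro p
    have heq : idx ⁻¹' {p} = S p.1 ∩ ⋂ i, {y | kdx y i = p.2 i} := by
      ext x
      simp only [Set.mem_preimage, Set.mem_singleton_iff, Set.mem_inter_iff,
        Set.mem_iInter, Set.mem_setOf_eq, hidxdef, Prod.ext_iff]
      constructor
      · rintro ⟨h1, h2⟩
        exact ⟨h1 ▸ hjdx x, fun i => congrFun h2 i⟩
      · rintro ⟨h1, h2⟩
        exact ⟨hjdx_eq x _ h1, funext h2⟩
    rw [heq]
    apply (hSmeas _).inter
    apply MeasurableSet.iInter
    intro i
    have : {y | kdx y i = p.2 i} = (fun y => F (W (ctr i) y)) ⁻¹' {(p.2 i : ℕ)} := by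
      ext y
      simp [hkdxdef, Fin.ext_iff]
    rw [this]
    exact (hFmeas.comp (hWsec (ctr i))) (measurableSet_singleton _)
  -- assemble the partition
  have hcard : Fintype.card (Fin m × (Fin m → Fin K)) = m * K ^ m := by
    simp [Fintype.card_fun]
  set n := m * K ^ m with hn
  set e : (Fin m × (Fin m → Fin K)) ≃ Fin n :=
    (Fintype.equivFin _).trans (finCongr hcard) with hedef
  refine ⟨n, fun i => idx ⁻¹' {e.symm i},
    fun x y => ε * ((kdx y (jdx x) : ℕ) + 1 : ℝ), ?_, ?_, ?_, ?_, ?_, ?_⟩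
  · -- cardinality bound
    rw [hn]
    push_cast
    have h : (K:ℝ)^m ≤ (1/ε)^m := by
      apply pow_le_pow_left₀ (by positivity) hKle
    exact mul_le_mul_of_nonneg_left h (Nat.cast_nonneg m)
  · intro i
    exact hidxmeas _
  · intro i j hij
    rw [Set.disjoint_left]
    intro x hx hx'
    simp only [Set.mem_preimage, Set.mem_singleton_iff] at hx hx'
    exact hij (e.symm.injective (hx ▸ hx'))
  · ext x
    simp only [Set.mem_iUnion, Set.mem_preimage, Set.mem_singleton_iff, Set.mem_univ,
      iff_true]
    exact ⟨e (idx x), by simp⟩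
  · intro i j x hx y hy x' hx' y' hy'
    simp only [Set.mem_preimage, Set.mem_singleton_iff] at hx hy hx' hy'
    have h1 : idx x = idx x' := by rw [hx, hx']
    have h2 : idx y = idx y' := by rw [hy, hy']
    have hj : jdx x = jdx x' := congrArg Prod.fst h1
    have hk : kdx y = kdx y' := congrArg Prod.snd h2
    show ε * (((kdx y (jdx x) : Fin K) : ℕ) + 1 : ℝ) = ε * (((kdx y' (jdx x') : Fin K) : ℕ) + 1 : ℝ)
    rw [hj, hk]
  · -- the integral bound
    set U : J → J → ℝ := fun x y => ε * ((kdx y (jdx x) : ℕ) + 1 : ℝ) with hUdef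
    have hUrange : ∀ x y, |W (ctr (jdx x)) y - U x y| ≤ ε := by
      intro x y
      have := hround (W (ctr (jdx x)) y) (hW0 _ _) (hW1 _ _)
      simpa [hUdef, hkdxdef] using this
    have key : ∀ x, ∫ y, |W x y - U x y| ∂μ ≤ 2*ε := by
      intro x
      set c := ctr (jdx x) with hc
      have hxc : rW x c ≤ ε := (hjdx x).1
      have hpt : ∀ y, |W x y - U x y| ≤ |W x y - W c y| + ε := by
        intro y
        calc |W x y - U x y| ≤ |W x y - W c y| + |W c y - U x y| := by
              have := abs_sub_abs_le_abs_sub (W x y - U x y) 0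
              calc |W x y - U x y| = |(W x y - W c y) + (W c y - U x y)| := by ring_nf
              _ ≤ |W x y - W c y| + |W c y - U x y| := abs_add_le _ _
        _ ≤ |W x y - W c y| + ε := by linarith [hUrange x y]
      have hint1 : Integrable (fun y => |W x y - W c y|) μ := by
        apply Integrable.mono' (integrable_const (2:ℝ))
        · exact (((hWsec x).sub (hWsec c)).abs).aestronglyMeasurable
        · refine ae_of_all _ fun y => ?_
          rw [Real.norm_eq_abs, abs_abs]
          have := abs_sub_abs_le_abs_sub (W x y) (W c y)
          have h1 : |W x y| ≤ 1 := abs_le.mpr ⟨by linarith [hW0 x y], hW1 x y⟩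
          have h2 : |W c y| ≤ 1 := abs_le.mpr ⟨by linarith [hW0 c y], hW1 c y⟩
          calc |W x y - W c y| ≤ |W x y| + |W c y| := abs_sub _ _
          _ ≤ 2 := by linarith
      calc ∫ y, |W x y - U x y| ∂μ ≤ ∫ y, (|W x y - W c y| + ε) ∂μ :=
            integral_mono_of_nonneg (ae_of_all _ fun y => abs_nonneg _)
              (hint1.add (integrable_const ε)) (ae_of_all _ hpt)
      _ = rW x c + ε := by
            rw [integral_add hint1 (integrable_const ε), integral_const]
            simp [hrW x c]
      _ ≤ 2*ε := by linarith
    calc ∫ x, ∫ y, |W x y - U x y| ∂μ ∂μ ≤ ∫ _x, (2*ε : ℝ) ∂μ :=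
          integral_mono_of_nonneg
            (ae_of_all _ fun x => integral_nonneg fun y => abs_nonneg _)
            (integrable_const _)
            (ae_of_all _ key)
    _ = 2*ε := by simp
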